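/- Let P > 0 and p ∈ [0, 1]. Define f(t_I, t_II) := (1 + P) − ln(2·(1 + P)) + (p·t_I + (1−p)·t_II)·P/(1 + P) − p·√(1 + 4·P·t_I) − (1−p)·√(1 + 4·P·t_II) + p·ln(1 + √(1 + 4·P·t_I)) + (1−p)·ln(1 + √(1 + 4·P·t_II)). Then f(t_I, t_II) ≥ 0 for all t_I, t_II ≥ 0. Moreover, if p ∈ (0, 1), then f(t_I, t_II) = 0 if and only if t_I = t_II = 1 + P. -/

import Mathlib

/-- The exponent `f₁ − f₂` arising in the ratio of the output density induced
by a composite shell codeword to the i.i.d. Gaussian output density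
`N(0, (1+P)·I)`, as a function of the normalized output energies `t_I, t_II`
on the two sub-blocks, with blocklength ratio `p`. -/
noncomputable def compositeShellExponent (P p tI tII : ℝ) : ℝ :=
  (1 + P) - Real.log (2 * (1 + P)) + (p * tI + (1 - p) * tII) * P / (1 + P) -
    p * Real.sqrt (1 + 4 * P * tI) - (1 - p) * Real.sqrt (1 + 4 * P * tII) +
    p * Real.log (1 + Real.sqrt (1 + 4 * P * tI)) +
    (1 - p) * Real.log (1 + Real.sqrt (1 + 4 * P * tII))

noncomputable def hAux (P t : ℝ) : ℝ :=
  (1 + P) - Real.log (2 * (1 + P)) + t * P / (1 + P) -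
    Real.sqrt (1 + 4 * P * t) + Real.log (1 + Real.sqrt (1 + 4 * P * t))

lemma hAux_key (P : ℝ) (hP : 0 < P) (t : ℝ) (ht : 0 ≤ t) :
    0 ≤ hAux P t ∧ (hAux P t = 0 ↔ t = 1 + P) := by
  have ha : (0:ℝ) < 1 + P := by linarith
  unfold hAux
  set s := Real.sqrt (1 + 4 * P * t) with hsdef
  have harg : (0:ℝ) ≤ 1 + 4 * P * t := by nlinarith
  have hs1 : 1 ≤ s := by
    rw [hsdef]
    exact Real.one_le_sqrt.mpr (by nlinarith)
  have hsq : s ^ 2 = 1 + 4 * P * t := Real.sq_sqrt harg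
  set u := (1 + s) / (2 * (1 + P)) with hudef
  have hu0 : 0 < u := div_pos (by linarith) (by linarith)
  have hau' : (1 + P) * u = (1 + s) / 2 := by rw [hudef]; field_simp
  have hau : 1 ≤ (1 + P) * u := by rw [hau']; linarith
  have hlog : Real.log (1 + s) = Real.log u + Real.log (2 * (1 + P)) := by
    have h1 : (1 + s) = u * (2 * (1 + P)) := by rw [hudef]; field_simp
    rw [h1, Real.log_mul (ne_of_gt hu0) (by positivity)]
  have halg2 : (1 + P) + t * P / (1 + P) - s = (1 + P) * (u - 1) ^ 2 - (u - 1) := by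
    rw [hudef]
    field_simp
    linear_combination (-1) * hsq
  have halg : (1 + P) - Real.log (2 * (1 + P)) + t * P / (1 + P) - s + Real.log (1 + s)
      = (1 + P) * (u - 1) ^ 2 - (u - 1) + Real.log u := by
    rw [hlog]; linarith
  rw [halg]
  have hteq : t = 1 + P ↔ u = 1 := by
    constructor
    · intro h
      have : s = 1 + 2 * P := by
        have : s ^ 2 = (1 + 2 * P) ^ 2 := by rw [hsq, h]; ring
        nlinarith
      rw [hudef, this]; field_simp; ring
    · intro h
      have hs' : s = 1 + 2 * P := by
        have := hau'
        rw [h, mul_one] at this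
        linarith
      have : 1 + 4 * P * t = (1 + 2 * P) ^ 2 := by rw [← hsq, hs']
      nlinarith
  by_cases hu1 : u = 1
  · rw [hteq, hu1]
    norm_num
  · have hlogu : 1 - 1 / u < Real.log u := by
      have hune : (1:ℝ)/u ≠ 1 := by
        intro h
        apply hu1
        field_simp at h
        linarith
      have := Real.log_lt_sub_one_of_pos (show (0:ℝ) < 1/u by positivity) hune
      rw [Real.log_div one_ne_zero (ne_of_gt hu0), Real.log_one] at this
      linarith
    have hquad : 0 ≤ (1 + P) * (u - 1) ^ 2 - (u - 1) + (1 - 1 / u) := by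
      have h1 : (1 + P) * (u - 1) ^ 2 - (u - 1) + (1 - 1 / u)
          = ((1 + P) * u - 1) * (u - 1) ^ 2 / u := by field_simp; ring
      rw [h1]
      exact div_nonneg (mul_nonneg (by linarith) (sq_nonneg _)) hu0.le
    have hpos : 0 < (1 + P) * (u - 1) ^ 2 - (u - 1) + Real.log u := by linarith
    constructor
    · linarith
    · constructor
      · intro h; linarith
      · intro h; exact absurd (hteq.mp h) hu1

lemma compositeShellExponent_split (P p tI tII : ℝ) (ha : (1:ℝ) + P ≠ 0) :
    compositeShellExponent P p tI tII = p * hAux P tI + (1 - p) * hAux P tII := by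
  unfold compositeShellExponent hAux
  field_simp
  ring


/-- The composite-shell exponent is nonnegative, and for `p ∈ (0,1)` it
vanishes exactly at `t_I = t_II = 1 + P`. -/
theorem composite_shell_exponent_nonneg (P p : ℝ) (hP : 0 < P)
    (hp0 : 0 ≤ p) (hp1 : p ≤ 1) :
    (∀ tI tII : ℝ, 0 ≤ tI → 0 ≤ tII → 0 ≤ compositeShellExponent P p tI tII) ∧
    (0 < p → p < 1 →
      ∀ tI tII : ℝ, 0 ≤ tI → 0 ≤ tII →
        (compositeShellExponent P p tI tII = 0 ↔ tI = 1 + P ∧ tII = 1 + P)) := by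
  have ha : (1:ℝ) + P ≠ 0 := by linarith
  constructor
  · intro tI tII hI hII
    rw [compositeShellExponent_split P p tI tII ha]
    exact add_nonneg (mul_nonneg hp0 (hAux_key P hP tI hI).1)
      (mul_nonneg (by linarith) (hAux_key P hP tII hII).1)
  · intro hp hp' tI tII hI hII
    rw [compositeShellExponent_split P p tI tII ha]
    obtain ⟨h1, h1e⟩ := hAux_key P hP tI hI
    obtain ⟨h2, h2e⟩ := hAux_key P hP tII hII
    constructor
    · intro h
      have e1 : hAux P tI = 0 := by nlinarith
      have e2 : hAux P tII = 0 := by nlinarith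
      exact ⟨h1e.mp e1, h2e.mp e2⟩
    · rintro ⟨e1, e2⟩
      rw [h1e.mpr e1, h2e.mpr e2]
      ring
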